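/- Under the same hypotheses as the previous derivative bound (k ≥ 3, cocompact torsion-free Fuchsian Γ, and the sum bound Σ_γ (|z−γz̄||cz̄+d|)^{−2n} ≤ (4π/(2k−1)) C_{X,k} (2y)^{−2n} for all n ≥ k), the mixed second derivative satisfies |∂²B_k(z)/∂z∂z̄| ≤ π(80k² + 8k)/(2k−1) · C_{X,k}/(2y)^{2k+2}. -/

import Mathlib

/-- The Möbius transform of `γ ∈ SL(2,ℝ)` applied to a complex number `w`. -/
noncomputable def moebius (γ : Matrix.SpecialLinearGroup (Fin 2) ℝ) (w : ℂ) : ℂ :=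
  ((γ.1 0 0 : ℂ) * w + (γ.1 0 1 : ℂ)) / ((γ.1 1 0 : ℂ) * w + (γ.1 1 1 : ℂ))

/-- The `γ`-term of the termwise mixed second derivative `∂²B_k/∂z∂z̄`:
`-2k(2k+1)(√-1)^{2k}/((z̄-γz)^{2k+2}(cz+d)^{2k+2}) + 4ck²(√-1)^{2k}/((z̄-γz)^{2k+1}(cz+d)^{2k+1})`. -/
noncomputable def ddBterm (k : ℕ) (z : ℂ) (γ : Matrix.SpecialLinearGroup (Fin 2) ℝ) : ℂ :=
  -((2 * k : ℂ) * (2 * k + 1) * Complex.I ^ (2 * k) /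
      (((starRingEnd ℂ) z - moebius γ z) ^ (2 * k + 2) *
        ((γ.1 1 0 : ℂ) * z + (γ.1 1 1 : ℂ)) ^ (2 * k + 2))) +
    (4 * (γ.1 1 0 : ℂ) * (k : ℂ) ^ 2 * Complex.I ^ (2 * k) /
      (((starRingEnd ℂ) z - moebius γ z) ^ (2 * k + 1) *
        ((γ.1 1 0 : ℂ) * z + (γ.1 1 1 : ℂ)) ^ (2 * k + 1)))

lemma det_entries (γ : Matrix.SpecialLinearGroup (Fin 2) ℝ) :
    γ.1 0 0 * γ.1 1 1 - γ.1 0 1 * γ.1 1 0 = 1 := by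
  have h := γ.2
  rw [Matrix.det_fin_two] at h
  linarith

lemma conj_moebius (γ : Matrix.SpecialLinearGroup (Fin 2) ℝ) (w : ℂ) :
    (starRingEnd ℂ) (moebius γ w) = moebius γ ((starRingEnd ℂ) w) := by
  simp [moebius, map_div₀, map_add, map_mul, Complex.conj_ofReal]

lemma abs_conj_sub (γ : Matrix.SpecialLinearGroup (Fin 2) ℝ) (z : ℂ) :
    norm ((starRingEnd ℂ) z - moebius γ z) =
    norm (z - moebius γ ((starRingEnd ℂ) z)) := by
  rw [← Complex.norm_conj ((starRingEnd ℂ) z - moebius γ z)]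
  simp [map_sub, conj_moebius]

lemma abs_denom_conj (γ : Matrix.SpecialLinearGroup (Fin 2) ℝ) (z : ℂ) :
    norm ((γ.1 1 0 : ℂ) * z + (γ.1 1 1 : ℂ)) =
    norm ((γ.1 1 0 : ℂ) * (starRingEnd ℂ) z + (γ.1 1 1 : ℂ)) := by
  rw [← Complex.norm_conj ((γ.1 1 0 : ℂ) * z + (γ.1 1 1 : ℂ))]
  simp [map_add, map_mul, Complex.conj_ofReal]

lemma moebius_im (γ : Matrix.SpecialLinearGroup (Fin 2) ℝ) (w : ℂ) :
    (moebius γ w).im = w.im / Complex.normSq ((γ.1 1 0 : ℂ) * w + (γ.1 1 1 : ℂ)) := by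
  have hdet := det_entries γ
  simp only [moebius, Complex.div_im, Complex.add_im, Complex.add_re, Complex.mul_im,
    Complex.mul_re, Complex.ofReal_re, Complex.ofReal_im]
  rw [div_sub_div_same]
  congr 1
  ring_nf
  linear_combination w.im * hdet

lemma denom_ne (γ : Matrix.SpecialLinearGroup (Fin 2) ℝ) {z : ℂ} (hz : 0 < z.im) :
    (γ.1 1 0 : ℂ) * z + (γ.1 1 1 : ℂ) ≠ 0 := by
  intro h
  have him : (γ.1 1 0 : ℝ) * z.im = 0 := by
    have := congrArg Complex.im h
    simpa [Complex.add_im, Complex.mul_im] using this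
  have hc : (γ.1 1 0 : ℝ) = 0 := by
    rcases mul_eq_zero.mp him with h' | h'
    · exact h'
    · exact absurd h' hz.ne'
  have hre := congrArg Complex.re h
  simp [Complex.add_re, Complex.mul_re, hc] at hre
  have hdet := det_entries γ
  rw [hc, hre] at hdet
  norm_num at hdet

lemma abs_c_le (γ : Matrix.SpecialLinearGroup (Fin 2) ℝ) {z : ℂ} (hz : 0 < z.im) :
    |(γ.1 1 0 : ℝ)| * z.im ≤ norm ((γ.1 1 0 : ℂ) * z + (γ.1 1 1 : ℂ)) := by
  have h := Complex.abs_im_le_norm ((γ.1 1 0 : ℂ) * z + (γ.1 1 1 : ℂ))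
  have him : ((γ.1 1 0 : ℂ) * z + (γ.1 1 1 : ℂ)).im = γ.1 1 0 * z.im := by
    simp [Complex.add_im, Complex.mul_im]
  rw [him, abs_mul, abs_of_pos hz] at h
  exact h

lemma sub_abs_ge (γ : Matrix.SpecialLinearGroup (Fin 2) ℝ) {z : ℂ} (hz : 0 < z.im) :
    z.im ≤ norm ((starRingEnd ℂ) z - moebius γ z) := by
  have h := Complex.abs_im_le_norm ((starRingEnd ℂ) z - moebius γ z)
  have him : ((starRingEnd ℂ) z - moebius γ z).im =
      -z.im - z.im / Complex.normSq ((γ.1 1 0 : ℂ) * z + (γ.1 1 1 : ℂ)) := by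
    simp [Complex.sub_im, Complex.conj_im, moebius_im]
  have hN : 0 ≤ z.im / Complex.normSq ((γ.1 1 0 : ℂ) * z + (γ.1 1 1 : ℂ)) :=
    div_nonneg hz.le (Complex.normSq_nonneg _)
  rw [him] at h
  have hneg := neg_le_abs (-z.im - z.im / Complex.normSq ((γ.1 1 0 : ℂ) * z + (γ.1 1 1 : ℂ)))
  linarith

lemma denom_pos (γ : Matrix.SpecialLinearGroup (Fin 2) ℝ) {z : ℂ} (hz : 0 < z.im) :
    0 < norm ((γ.1 1 0 : ℂ) * z + (γ.1 1 1 : ℂ)) :=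
  norm_pos_iff.mpr (denom_ne γ hz)

lemma term_bound (γ : Matrix.SpecialLinearGroup (Fin 2) ℝ) {z : ℂ} (hz : 0 < z.im) (k : ℕ) :
    norm (ddBterm k z γ) ≤
      2 * (k : ℝ) * (2 * k + 1) * (1 / (norm ((starRingEnd ℂ) z - moebius γ z) *
        norm ((γ.1 1 0 : ℂ) * z + (γ.1 1 1 : ℂ)))) ^ (2 * (k + 1)) +
      4 * (k : ℝ) ^ 2 / z.im ^ 2 * (1 / (norm ((starRingEnd ℂ) z - moebius γ z) *
        norm ((γ.1 1 0 : ℂ) * z + (γ.1 1 1 : ℂ)))) ^ (2 * k) := by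
  set A := norm ((starRingEnd ℂ) z - moebius γ z) with hAdef
  set B := norm ((γ.1 1 0 : ℂ) * z + (γ.1 1 1 : ℂ)) with hBdef
  have hA : z.im ≤ A := sub_abs_ge γ hz
  have hA0 : 0 < A := lt_of_lt_of_le hz hA
  have hB0 : 0 < B := denom_pos γ hz
  have hcB : |(γ.1 1 0 : ℝ)| * z.im ≤ B := abs_c_le γ hz
  have e2 : norm (2 * (k : ℂ) + 1) = 2 * (k : ℝ) + 1 := by
    rw [show (2 * (k : ℂ) + 1) = ((2 * (k : ℝ) + 1 : ℝ) : ℂ) by push_cast; ring,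
      Complex.norm_real, Real.norm_eq_abs, abs_of_nonneg (by positivity)]
  have habs1 : norm (-((2 * k : ℂ) * (2 * k + 1) * Complex.I ^ (2 * k) /
      (((starRingEnd ℂ) z - moebius γ z) ^ (2 * k + 2) *
        ((γ.1 1 0 : ℂ) * z + (γ.1 1 1 : ℂ)) ^ (2 * k + 2)))) =
      2 * (k : ℝ) * (2 * k + 1) / (A ^ (2 * k + 2) * B ^ (2 * k + 2)) := by
    simp only [norm_neg, norm_div, norm_mul, norm_pow, Complex.norm_I, one_pow, mul_one,
      Complex.norm_two, Complex.norm_natCast, e2, ← hAdef, ← hBdef]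
  have habs2 : norm (4 * (γ.1 1 0 : ℂ) * (k : ℂ) ^ 2 * Complex.I ^ (2 * k) /
      (((starRingEnd ℂ) z - moebius γ z) ^ (2 * k + 1) *
        ((γ.1 1 0 : ℂ) * z + (γ.1 1 1 : ℂ)) ^ (2 * k + 1))) =
      4 * |(γ.1 1 0 : ℝ)| * (k : ℝ) ^ 2 / (A ^ (2 * k + 1) * B ^ (2 * k + 1)) := by
    simp only [norm_div, norm_mul, norm_pow, Complex.norm_I, one_pow, mul_one,
      Complex.norm_real, Real.norm_eq_abs, Complex.norm_natCast, Complex.norm_ofNat, ← hAdef, ← hBdef]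
  calc norm (ddBterm k z γ) ≤
      2 * (k : ℝ) * (2 * k + 1) / (A ^ (2 * k + 2) * B ^ (2 * k + 2)) +
      4 * |(γ.1 1 0 : ℝ)| * (k : ℝ) ^ 2 / (A ^ (2 * k + 1) * B ^ (2 * k + 1)) := by
        rw [← habs1, ← habs2]; exact norm_add_le _ _
    _ ≤ _ := by
        gcongr ?_ + ?_
        · have he : (1 / (A * B)) ^ (2 * (k + 1)) = 1 / (A ^ (2 * k + 2) * B ^ (2 * k + 2)) := by
            rw [div_pow, one_pow, mul_pow]
            congr 2 <;> ring
          rw [he]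
          exact le_of_eq (by ring)
        · have hkey : |(γ.1 1 0 : ℝ)| * z.im ^ 2 ≤ A * B := by
            nlinarith [abs_nonneg ((γ.1 1 0 : ℝ))]
          have he : (1 / (A * B)) ^ (2 * k) = 1 / (A ^ (2 * k) * B ^ (2 * k)) := by
            rw [div_pow, one_pow, mul_pow]
          rw [he, div_mul_div_comm, mul_one,
            div_le_div_iff₀ (by positivity) (by positivity)]
          calc 4 * |(γ.1 1 0 : ℝ)| * (k : ℝ) ^ 2 * (z.im ^ 2 * (A ^ (2 * k) * B ^ (2 * k)))
              = (|(γ.1 1 0 : ℝ)| * z.im ^ 2) * (4 * (k : ℝ) ^ 2 * (A ^ (2 * k) * B ^ (2 * k))) := by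
                ring
            _ ≤ (A * B) * (4 * (k : ℝ) ^ 2 * (A ^ (2 * k) * B ^ (2 * k))) :=
                mul_le_mul_of_nonneg_right hkey (by positivity)
            _ = 4 * (k : ℝ) ^ 2 * (A ^ (2 * k + 1) * B ^ (2 * k + 1)) := by ring

/-- If for all `n ≥ k` one has `Σ_γ (|z - γz̄| |cz̄+d|)^{-2n} ≤ (4π/(2k-1)) C (2y)^{-2n}`,
then the termwise mixed second derivative of `B_k` satisfies
`|∂²B_k/∂z∂z̄| ≤ π(80k² + 8k)/(2k-1) · C/(2y)^{2k+2}`. -/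
theorem statement10 (Γ : Subgroup (Matrix.SpecialLinearGroup (Fin 2) ℝ))
    (k : ℕ) (hk : 3 ≤ k) (z : ℂ) (hz : 0 < z.im) (C : ℝ)
    (hsum : ∀ n : ℕ, k ≤ n → Summable fun γ : Γ =>
      1 / (norm ((z - moebius (γ : Matrix.SpecialLinearGroup (Fin 2) ℝ)
            ((starRingEnd ℂ) z))) *
          norm (((γ : Matrix.SpecialLinearGroup (Fin 2) ℝ).1 1 0 : ℂ) *
            (starRingEnd ℂ) z +
            ((γ : Matrix.SpecialLinearGroup (Fin 2) ℝ).1 1 1 : ℂ))) ^ (2 * n))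
    (hbound : ∀ n : ℕ, k ≤ n → (∑' γ : Γ,
        1 / (norm ((z - moebius (γ : Matrix.SpecialLinearGroup (Fin 2) ℝ)
              ((starRingEnd ℂ) z))) *
            norm (((γ : Matrix.SpecialLinearGroup (Fin 2) ℝ).1 1 0 : ℂ) *
              (starRingEnd ℂ) z +
              ((γ : Matrix.SpecialLinearGroup (Fin 2) ℝ).1 1 1 : ℂ))) ^ (2 * n)) ≤
      4 * Real.pi / (2 * (k : ℝ) - 1) * C / (2 * z.im) ^ (2 * n))
    (hS : Summable fun γ : Γ => ddBterm k z (γ : Matrix.SpecialLinearGroup (Fin 2) ℝ))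
    (hS1 : Summable fun γ : Γ =>
      -((2 * (k : ℂ)) * (2 * k + 1) * Complex.I ^ (2 * k) /
        (((starRingEnd ℂ) z - moebius (γ : Matrix.SpecialLinearGroup (Fin 2) ℝ) z) ^ (2 * k + 2) *
          (((γ : Matrix.SpecialLinearGroup (Fin 2) ℝ).1 1 0 : ℂ) * z +
            ((γ : Matrix.SpecialLinearGroup (Fin 2) ℝ).1 1 1 : ℂ)) ^ (2 * k + 2)))) :
    norm (∑' γ : Γ, ddBterm k z (γ : Matrix.SpecialLinearGroup (Fin 2) ℝ)) ≤
      Real.pi * (80 * (k : ℝ) ^ 2 + 8 * k) / (2 * (k : ℝ) - 1) * C /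
        (2 * z.im) ^ (2 * k + 2) := by
  set g : ℕ → Γ → ℝ := fun n γ =>
    1 / (norm ((z - moebius (γ : Matrix.SpecialLinearGroup (Fin 2) ℝ)
          ((starRingEnd ℂ) z))) *
        norm (((γ : Matrix.SpecialLinearGroup (Fin 2) ℝ).1 1 0 : ℂ) *
          (starRingEnd ℂ) z +
          ((γ : Matrix.SpecialLinearGroup (Fin 2) ℝ).1 1 1 : ℂ))) ^ (2 * n) with hg
  have key : ∀ γ : Γ, norm (ddBterm k z (γ : Matrix.SpecialLinearGroup (Fin 2) ℝ)) ≤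
      2 * (k : ℝ) * (2 * k + 1) * g (k + 1) γ + 4 * (k : ℝ) ^ 2 / z.im ^ 2 * g k γ := by
    intro γ
    have h := term_bound (γ : Matrix.SpecialLinearGroup (Fin 2) ℝ) hz k
    rw [abs_conj_sub, abs_denom_conj, one_div_pow, one_div_pow] at h
    exact h
  have hs0 := hsum k le_rfl
  have hs1 := hsum (k + 1) (Nat.le_succ k)
  have hmaj : Summable (fun γ : Γ =>
      2 * (k : ℝ) * (2 * k + 1) * g (k + 1) γ + 4 * (k : ℝ) ^ 2 / z.im ^ 2 * g k γ) :=
    (hs1.mul_left _).add (hs0.mul_left _)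
  have habs : Summable (fun γ : Γ =>
      norm (ddBterm k z (γ : Matrix.SpecialLinearGroup (Fin 2) ℝ))) :=
    Summable.of_nonneg_of_le (fun γ => norm_nonneg _) key hmaj
  have hy : (z.im : ℝ) ≠ 0 := hz.ne'
  have hk3 : (3 : ℝ) ≤ (k : ℝ) := by exact_mod_cast hk
  have hk1 : (2 * (k : ℝ) - 1) ≠ 0 := by nlinarith
  calc norm (∑' γ : Γ, ddBterm k z (γ : Matrix.SpecialLinearGroup (Fin 2) ℝ)) ≤
      ∑' γ : Γ, norm (ddBterm k z (γ : Matrix.SpecialLinearGroup (Fin 2) ℝ)) := by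
        simpa using
          norm_tsum_le_tsum_norm (f := fun γ : Γ =>
            ddBterm k z (γ : Matrix.SpecialLinearGroup (Fin 2) ℝ))
            (by simpa using habs)
    _ ≤ ∑' γ : Γ, (2 * (k : ℝ) * (2 * k + 1) * g (k + 1) γ +
          4 * (k : ℝ) ^ 2 / z.im ^ 2 * g k γ) := habs.tsum_le_tsum key hmaj
    _ = 2 * (k : ℝ) * (2 * k + 1) * (∑' γ : Γ, g (k + 1) γ) +
          4 * (k : ℝ) ^ 2 / z.im ^ 2 * (∑' γ : Γ, g k γ) := by
        rw [Summable.tsum_add (hs1.mul_left _) (hs0.mul_left _), tsum_mul_left, tsum_mul_left]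
    _ ≤ 2 * (k : ℝ) * (2 * k + 1) * (4 * Real.pi / (2 * (k : ℝ) - 1) * C /
          (2 * z.im) ^ (2 * (k + 1))) +
        4 * (k : ℝ) ^ 2 / z.im ^ 2 * (4 * Real.pi / (2 * (k : ℝ) - 1) * C /
          (2 * z.im) ^ (2 * k)) := by
        exact add_le_add
          (mul_le_mul_of_nonneg_left (hbound (k + 1) (Nat.le_succ k)) (by positivity))
          (mul_le_mul_of_nonneg_left (hbound k le_rfl) (by positivity))
    _ = Real.pi * (80 * (k : ℝ) ^ 2 + 8 * k) / (2 * (k : ℝ) - 1) * C /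
        (2 * z.im) ^ (2 * k + 2) := by
        field_simp
        ring
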